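/- For any θ < 1 (including θ ≤ 0), the function f(y) = (1-θ)φ((y-μ)/σ) / [σ(1 - θΦ((y-μ)/σ))²] is a probability density function on ℝ, i.e., f ≥ 0 and ∫_ℝ f(y) dy = 1. -/

import Mathlib

open MeasureTheory Filter Topology Set Real

noncomputable def stdPdf (x : ℝ) : ℝ := (Real.sqrt (2 * Real.pi))⁻¹ * Real.exp (-(x ^ 2) / 2)

noncomputable def stdCdf (x : ℝ) : ℝ := ∫ t in Set.Iic x, stdPdf t

lemma stdPdf_pos (x : ℝ) : 0 < stdPdf x := by
  unfold stdPdf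
  have := Real.pi_pos
  positivity

lemma continuous_stdPdf : Continuous stdPdf := by
  unfold stdPdf; fun_prop

lemma integrable_stdPdf : Integrable stdPdf := by
  unfold stdPdf
  apply Integrable.const_mul
  have h : ∀ x : ℝ, Real.exp (-(x^2)/2) = Real.exp (-(1/2 : ℝ)*x^2) := by
    intro x; ring_nf
  simp_rw [h]
  exact integrable_exp_neg_mul_sq (by norm_num)

lemma integral_stdPdf : ∫ x, stdPdf x = 1 := by
  unfold stdPdf
  rw [MeasureTheory.integral_const_mul]
  have h : ∀ x : ℝ, Real.exp (-(x^2)/2) = Real.exp (-(1/2 : ℝ)*x^2) := by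
    intro x; ring_nf
  simp_rw [h, integral_gaussian]
  have h2 : Real.pi / (1/2) = 2 * Real.pi := by ring
  rw [h2]
  have : Real.sqrt (2 * Real.pi) ≠ 0 := by
    have := Real.pi_pos; positivity
  field_simp

lemma hasDerivAt_stdCdf (x : ℝ) : HasDerivAt stdCdf (stdPdf x) x := by
  have key : ∀ y : ℝ, stdCdf y = (∫ t in (0:ℝ)..y, stdPdf t) + stdCdf 0 := by
    intro y
    rw [← intervalIntegral.integral_Iic_sub_Iic integrable_stdPdf.integrableOn
      integrable_stdPdf.integrableOn]
    unfold stdCdf; ring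
  have h : HasDerivAt (fun y : ℝ => (∫ t in (0:ℝ)..y, stdPdf t) + stdCdf 0) (stdPdf x) x := by
    apply HasDerivAt.add_const
    exact intervalIntegral.integral_hasDerivAt_right
      (integrable_stdPdf.intervalIntegrable)
      (continuous_stdPdf.stronglyMeasurable.stronglyMeasurableAtFilter)
      continuous_stdPdf.continuousAt
  exact h.congr_of_eventuallyEq (Eventually.of_forall key)

lemma stdCdf_nonneg (x : ℝ) : 0 ≤ stdCdf x :=
  setIntegral_nonneg measurableSet_Iic fun t _ => (stdPdf_pos t).le

lemma stdCdf_le_one (x : ℝ) : stdCdf x ≤ 1 := by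
  rw [← integral_stdPdf]
  exact setIntegral_le_integral integrable_stdPdf (Eventually.of_forall fun t => (stdPdf_pos t).le)

lemma stdCdf_tendsto_atTop : Tendsto stdCdf atTop (𝓝 1) := by
  have := (aecover_Iic (μ := (volume : Measure ℝ)) (tendsto_id (α := ℝ))
    |>.integral_tendsto_of_countably_generated integrable_stdPdf)
  rwa [integral_stdPdf] at this

lemma stdCdf_tendsto_atBot : Tendsto stdCdf atBot (𝓝 0) := by
  have h1 : Tendsto (fun x : ℝ => ∫ t in Ioi x, stdPdf t) atBot (𝓝 1) := by
    have := (aecover_Ioi (μ := (volume : Measure ℝ)) (tendsto_id (α := ℝ))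
      |>.integral_tendsto_of_countably_generated integrable_stdPdf)
    rwa [integral_stdPdf] at this
  have h2 : ∀ x : ℝ, stdCdf x = 1 - ∫ t in Ioi x, stdPdf t := by
    intro x
    have h3 := intervalIntegral.integral_Iic_add_Ioi (b := x) (μ := volume)
      integrable_stdPdf.integrableOn integrable_stdPdf.integrableOn
    rw [integral_stdPdf] at h3
    unfold stdCdf
    linarith
  have h0 : Tendsto (fun x : ℝ => 1 - ∫ t in Ioi x, stdPdf t) atBot (𝓝 (1 - 1)) :=
    tendsto_const_nhds.sub h1
  simp only [sub_self] at h0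
  exact h0.congr fun x => (h2 x).symm

lemma denom_pos' {θ : ℝ} (hθ : θ < 1) {c : ℝ} (h0 : 0 ≤ c) (h1 : c ≤ 1) :
    0 < 1 - θ * c := by
  rcases le_or_gt θ 0 with h | h <;> nlinarith

lemma denom_ge {θ : ℝ} (hθ : θ < 1) {c : ℝ} (h0 : 0 ≤ c) (h1 : c ≤ 1) :
    min 1 (1 - θ) ≤ 1 - θ * c := by
  rcases le_or_gt θ 0 with h | h
  · exact le_trans (min_le_left _ _) (by nlinarith)
  · exact le_trans (min_le_right _ _) (by nlinarith)

set_option maxHeartbeats 1000000 in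
/-- for any θ < 1 the normal-geometric density
`f(y) = (1-θ)φ(z)/[σ(1-θΦ(z))²]` is a probability density on ℝ. -/
theorem ng_is_density (μ σ θ : ℝ) (hσ : 0 < σ) (hθ : θ < 1) :
    (∀ y : ℝ, 0 ≤ (1 - θ) * stdPdf ((y - μ) / σ)
        / (σ * (1 - θ * stdCdf ((y - μ) / σ)) ^ 2)) ∧
    ∫ y : ℝ, (1 - θ) * stdPdf ((y - μ) / σ)
        / (σ * (1 - θ * stdCdf ((y - μ) / σ)) ^ 2) = 1 := by
  have hden : ∀ z : ℝ, 0 < 1 - θ * stdCdf z :=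
    fun z => denom_pos' hθ (stdCdf_nonneg z) (stdCdf_le_one z)
  have hnn : ∀ y : ℝ, 0 ≤ (1 - θ) * stdPdf ((y - μ) / σ)
      / (σ * (1 - θ * stdCdf ((y - μ) / σ)) ^ 2) := by
    intro y
    apply div_nonneg
    · exact mul_nonneg (by linarith) (stdPdf_pos _).le
    · positivity
  refine ⟨hnn, ?_⟩
  set f : ℝ → ℝ := fun y => (1 - θ) * stdPdf ((y - μ) / σ)
      / (σ * (1 - θ * stdCdf ((y - μ) / σ)) ^ 2) with hf
  set g : ℝ → ℝ := fun y => (1 - θ) * stdCdf ((y - μ) / σ)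
      / (1 - θ * stdCdf ((y - μ) / σ)) with hg
  -- derivative of z
  have hz : ∀ y : ℝ, HasDerivAt (fun y : ℝ => (y - μ) / σ) (1 / σ) y := by
    intro y
    simpa using ((hasDerivAt_id y).sub_const μ).div_const σ
  have hC : ∀ y : ℝ, HasDerivAt (fun y : ℝ => stdCdf ((y - μ) / σ))
      (stdPdf ((y - μ) / σ) * (1 / σ)) y :=
    fun y => (hasDerivAt_stdCdf _).comp y (hz y)
  have hgderiv : ∀ y : ℝ, HasDerivAt g (f y) y := by
    intro y
    have hc := hC y
    have hne : (1 - θ * stdCdf ((y - μ) / σ)) ≠ 0 := (hden _).ne'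
    have h1 : HasDerivAt (fun y : ℝ => (1 - θ) * stdCdf ((y - μ) / σ))
        ((1 - θ) * (stdPdf ((y - μ) / σ) * (1 / σ))) y := hc.const_mul _
    have h2 : HasDerivAt (fun y : ℝ => 1 - θ * stdCdf ((y - μ) / σ))
        (-(θ * (stdPdf ((y - μ) / σ) * (1 / σ)))) y := (hc.const_mul θ).const_sub 1
    have h3 := h1.div h2 hne
    convert h3 using 1
    · rfl
    · rfl
    · rfl
    rw [hf]
    field_simp
    ring
  -- continuity of stdCdf
  have hCdfCont : Continuous stdCdf := by
    have : Differentiable ℝ stdCdf := fun x => (hasDerivAt_stdCdf x).differentiableAt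
    exact this.continuous
  -- integrability of f
  have hgauss : Integrable (fun y : ℝ => stdPdf ((y - μ) / σ)) := by
    have h0 : Integrable (fun x : ℝ =>
        (Real.sqrt (2 * Real.pi))⁻¹ * Real.exp (-(1 / (2 * σ ^ 2)) * x ^ 2)) :=
      (integrable_exp_neg_mul_sq (by positivity)).const_mul _
    have h1 := h0.comp_sub_right μ
    refine h1.congr (Eventually.of_forall fun y => ?_)
    show (Real.sqrt (2*Real.pi))⁻¹ * Real.exp (-(1/(2*σ^2)) * (y - μ)^2) = stdPdf ((y-μ)/σ)
    unfold stdPdf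
    have h2 : -(1/(2*σ^2)) * (y - μ)^2 = -(((y-μ)/σ)^2)/2 := by
      rw [div_pow, neg_div, div_div, neg_mul, neg_inj, div_eq_mul_inv, div_eq_mul_inv,
        mul_comm (σ^2) 2]
      ring
    rw [h2]
  have hfint : Integrable f := by
    set m : ℝ := min 1 (1 - θ) with hm
    have hmpos : 0 < m := lt_min one_pos (by linarith)
    apply Integrable.mono' ((hgauss.const_mul ((1 - θ) / (σ * m ^ 2))))
    · apply Continuous.aestronglyMeasurable
      rw [hf]
      have haff : Continuous (fun y : ℝ => (y - μ) / σ) := by fun_prop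
      apply Continuous.div
      · exact continuous_const.mul (continuous_stdPdf.comp haff)
      · exact continuous_const.mul
          (((continuous_const.sub (continuous_const.mul (hCdfCont.comp haff)))).pow 2)
      · intro y
        have := hden ((y - μ) / σ)
        positivity
    · refine Eventually.of_forall fun y => ?_
      rw [Real.norm_of_nonneg (hnn y)]
      have key : (1 - θ) * stdPdf ((y - μ) / σ) / (σ * (1 - θ * stdCdf ((y - μ) / σ)) ^ 2)
          ≤ (1 - θ) * stdPdf ((y - μ) / σ) / (σ * m ^ 2) := by
        apply div_le_div_of_nonneg_left (mul_nonneg (by linarith) (stdPdf_pos _).le)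
          (by positivity)
        apply mul_le_mul_of_nonneg_left _ hσ.le
        exact pow_le_pow_left₀ hmpos.le
          (denom_ge hθ (stdCdf_nonneg _) (stdCdf_le_one _)) 2
      calc (1 - θ) * stdPdf ((y - μ) / σ) / (σ * (1 - θ * stdCdf ((y - μ) / σ)) ^ 2)
          ≤ (1 - θ) * stdPdf ((y - μ) / σ) / (σ * m ^ 2) := key
        _ = (1 - θ) / (σ * m ^ 2) * stdPdf ((y - μ) / σ) := by ring
  -- limits of g
  have hztop : Tendsto (fun y : ℝ => (y - μ) / σ) atTop atTop := by
    have h1 : Tendsto (fun y : ℝ => y - μ) atTop atTop :=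
      (tendsto_atTop_add_const_right atTop (-μ) tendsto_id).congr fun y => by
        simp [sub_eq_add_neg]
    exact h1.atTop_div_const hσ
  have hzbot : Tendsto (fun y : ℝ => (y - μ) / σ) atBot atBot := by
    have h1 : Tendsto (fun y : ℝ => y - μ) atBot atBot :=
      (tendsto_atBot_add_const_right atBot (-μ) tendsto_id).congr fun y => by
        simp [sub_eq_add_neg]
    exact h1.atBot_div_const hσ
  have hCtop : Tendsto (fun y : ℝ => stdCdf ((y - μ) / σ)) atTop (𝓝 1) :=
    stdCdf_tendsto_atTop.comp hztop
  have hCbot : Tendsto (fun y : ℝ => stdCdf ((y - μ) / σ)) atBot (𝓝 0) :=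
    stdCdf_tendsto_atBot.comp hzbot
  set F : ℝ → ℝ := fun t => (1 - θ) * t / (1 - θ * t) with hF
  have hgtop : Tendsto g atTop (𝓝 1) := by
    have hF1 : ContinuousAt F 1 := by
      apply ContinuousAt.div (by fun_prop) (by fun_prop)
      simp only [mul_one]
      exact sub_ne_zero.2 hθ.ne'
    have h := hF1.tendsto.comp hCtop
    have e : F 1 = 1 := by
      rw [hF]
      simp only [mul_one]
      exact div_self (sub_ne_zero.2 hθ.ne')
    rw [e] at h
    exact h.congr fun y => rfl
  have hgbot : Tendsto g atBot (𝓝 0) := by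
    have hF0 : ContinuousAt F 0 := by
      apply ContinuousAt.div (by fun_prop) (by fun_prop)
      norm_num
    have h := hF0.tendsto.comp hCbot
    have e : F 0 = 0 := by rw [hF]; norm_num
    rw [e] at h
    exact h.congr fun y => rfl
  have := integral_of_hasDerivAt_of_tendsto hgderiv hfint hgbot hgtop
  rw [this]
  norm_num
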